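/- Pushing a block B consisting of p maxima and q minima down past a block A consisting of M maxima and m minima changes the width of the critical sequence by exactly 4(q·M − p·m). That is, if a critical sequence has the form u ++ A ++ B ++ v and is rearranged to u ++ B ++ A ++ v (with A and B any lists of +1/−1 entries, B containing p entries equal to −1 and q entries equal to +1, A containing M entries equal to −1 and m entries equal to +1), then W(u ++ B ++ A ++ v) − W(u ++ A ++ B ++ v) = 4(q·M − p·m). -/

import Mathlib

/-- The width of a critical sequence `e` (entries `+1` = minimum, `-1` = maximum)
with initial strand count `c`. -/
def seqWidth (c : ℤ) (e : List ℤ) : ℤ :=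
  ∑ k ∈ Finset.Ico 1 e.length, (c + 2 * ((e.take k).sum))

/-- Auxiliary: sum of strand counts at all levels `0, 1, …, |e| - 1`. -/
def G (c : ℤ) (e : List ℤ) : ℤ :=
  ∑ k ∈ Finset.range e.length, (c + 2 * ((e.take k).sum))

lemma seqWidth_eq_G (c : ℤ) (e : List ℤ) (he : e ≠ []) :
    seqWidth c e = G c e - c := by
  have hlen : 0 < e.length := List.length_pos_iff.mpr he
  rw [seqWidth, G, Finset.range_eq_Ico, Finset.sum_eq_sum_Ico_succ_bot hlen]
  simp

lemma G_append (c : ℤ) (e f : List ℤ) :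
    G c (e ++ f) = G c e + G (c + 2 * e.sum) f := by
  unfold G
  rw [List.length_append, Finset.sum_range_add]
  congr 1
  · apply Finset.sum_congr rfl
    intro k hk
    rw [List.take_append_of_le_length (le_of_lt (Finset.mem_range.mp hk))]
  · apply Finset.sum_congr rfl
    intro k _
    rw [List.take_append, List.sum_append, List.take_of_length_le (by omega), Nat.add_sub_cancel_left]
    ring

lemma G_shift (c d : ℤ) (e : List ℤ) :
    G (c + d) e = G c e + e.length * d := by
  unfold G
  rw [Finset.sum_add_distrib]
  simp [Finset.sum_add_distrib, mul_comm]
  ring_nf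

lemma sum_count (e : List ℤ) (he : ∀ x ∈ e, x = 1 ∨ x = -1) :
    e.sum = (e.count 1 : ℤ) - (e.count (-1) : ℤ) ∧
      (e.length : ℤ) = (e.count 1 : ℤ) + (e.count (-1) : ℤ) := by
  induction e with
  | nil => simp
  | cons a t ih =>
    obtain ⟨h1, h2⟩ := ih (fun x hx => he x (List.mem_cons_of_mem a hx))
    rcases he a List.mem_cons_self with h | h <;> subst h <;>
      refine ⟨?_, ?_⟩ <;> simp [List.count_cons, h1, h2] <;> ring

/-- Pushing a block `B` with `p` maxima and `q` minima down past a block `A` with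
`M` maxima and `m` minima changes the width by exactly `4(q·M − p·m)`. -/
theorem push_block_past_block (c : ℤ) (u v A B : List ℤ)
    (hu : ∀ x ∈ u, x = 1 ∨ x = -1) (hv : ∀ x ∈ v, x = 1 ∨ x = -1)
    (hA : ∀ x ∈ A, x = 1 ∨ x = -1) (hB : ∀ x ∈ B, x = 1 ∨ x = -1)
    (p q M m : ℕ)
    (hp : B.count (-1) = p) (hq : B.count 1 = q)
    (hM : A.count (-1) = M) (hm : A.count 1 = m) :
    seqWidth c (u ++ B ++ A ++ v) - seqWidth c (u ++ A ++ B ++ v)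
      = 4 * ((q : ℤ) * M - (p : ℤ) * m) := by
  obtain ⟨hBs, hBl⟩ := sum_count B hB
  obtain ⟨hAs, hAl⟩ := sum_count A hA
  by_cases hne : u ++ B ++ A ++ v = []
  · simp only [List.append_eq_nil_iff] at hne
    obtain ⟨⟨⟨hu0, hB0⟩, hA0⟩, hv0⟩ := hne
    subst hu0; subst hB0; subst hA0; subst hv0
    simp at hp hq hM hm
    subst hp; subst hq; subst hM; subst hm
    simp [seqWidth]
  · have hne' : u ++ A ++ B ++ v ≠ [] := by
      intro h
      apply hne
      apply List.eq_nil_of_length_eq_zero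
      have := congrArg List.length h
      simp only [List.length_append, List.length_nil] at this ⊢
      omega
    rw [seqWidth_eq_G _ _ hne, seqWidth_eq_G _ _ hne']
    have key : ∀ X Y : List ℤ, G c (u ++ X ++ Y ++ v) =
        G c u + G (c + 2 * u.sum) X + G (c + 2 * u.sum) Y + (Y.length : ℤ) * (2 * X.sum)
          + G (c + 2 * u.sum + 2 * X.sum + 2 * Y.sum) v := by
      intro X Y
      rw [List.append_assoc, List.append_assoc, G_append, G_append, G_append,
        G_shift (c + 2 * u.sum) (2 * X.sum) Y]
      ring
    rw [key, key, hAs, hBs, hAl, hBl, hp, hq, hM, hm]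
    ring
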